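/- arXiv:1705.02319 — 5 statements merged into one kernel-verified Lean document; each statement's English description precedes it below -/
import Mathlib

section
/- Consider the planar system ẋ = (1/τ₁)·sin(2θ), θ̇ = ω − K·(x + (τ₂/τ₁)·sin(2θ)) with τ₁ > 0, τ₂ > 0, K > 0, and the function V(x, θ) = (K·τ₁/2)·(x − ω/K)² + ∫₀^θ sin(2s) ds. Then along any solution (x(t), θ(t)), the derivative of t ↦ V(x(t), θ(t)) equals −(K·τ₂/τ₁)·sin²(2θ(t)), and in particular is ≤ 0. -/
open Real

theorem costas_lyapunov_derivative
    (τ₁ τ₂ K ω : ℝ) (hτ₁ : 0 < τ₁) (hτ₂ : 0 < τ₂) (hK : 0 < K)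
    (x θ : ℝ → ℝ)
    (hx : ∀ t, HasDerivAt x ((1/τ₁) * Real.sin (2 * θ t)) t)
    (hθ : ∀ t, HasDerivAt θ (ω - K * (x t + (τ₂/τ₁) * Real.sin (2 * θ t))) t)
    (V : ℝ → ℝ → ℝ)
    (hV : V = fun x θ => K * τ₁ / 2 * (x - ω/K)^2 + ∫ s in (0:ℝ)..θ, Real.sin (2*s)) :
    ∀ t, HasDerivAt (fun t => V (x t) (θ t))
        (-(K * τ₂ / τ₁) * (Real.sin (2 * θ t))^2) t ∧
      -(K * τ₂ / τ₁) * (Real.sin (2 * θ t))^2 ≤ 0 := by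
  intro t
  constructor
  · subst hV
    have hcont : Continuous (fun s : ℝ => Real.sin (2 * s)) := by continuity
    have hint : HasDerivAt (fun u : ℝ => ∫ s in (0:ℝ)..u, Real.sin (2*s))
        (Real.sin (2 * θ t)) (θ t) :=
      intervalIntegral.integral_hasDerivAt_right (hcont.intervalIntegrable _ _)
        hcont.stronglyMeasurable.stronglyMeasurableAtFilter hcont.continuousAt
    have h1 := (((hx t).sub_const (ω/K)).pow 2).const_mul (K * τ₁ / 2)
    have h2 : HasDerivAt (fun t => ∫ s in (0:ℝ)..(θ t), Real.sin (2*s))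
        (Real.sin (2 * θ t) * (ω - K * (x t + (τ₂/τ₁) * Real.sin (2 * θ t)))) t :=
      hint.comp t (hθ t)
    have := h1.add h2
    refine this.congr_deriv ?_
    have hK0 : K ≠ 0 := hK.ne'
    have hτ0 : τ₁ ≠ 0 := hτ₁.ne'
    simp only [show (2:ℕ) - 1 = 1 from rfl, pow_one]
    field_simp
    ring
  · have : 0 ≤ K * τ₂ / τ₁ := by positivity
    nlinarith [sq_nonneg (Real.sin (2 * θ t))]
end

section
/- For the system ẋ = (1/τ₁)·sin(2θ), θ̇ = ω − K·(x + (τ₂/τ₁)·sin(2θ)) with τ₁, τ₂, K > 0, if a solution (x(t), θ(t)) satisfies sin(2θ(t)) = 0 for all t in a nontrivial interval, then the solution is constant on that interval (i.e., it is an equilibrium). -/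
open Real

theorem costas_no_nontrivial_trajectory_in_zero_set
    (τ₁ τ₂ K ω : ℝ) (hτ₁ : 0 < τ₁) (hτ₂ : 0 < τ₂) (hK : 0 < K)
    (x θ : ℝ → ℝ) (a b : ℝ) (hab : a < b)
    (hx : ∀ t, HasDerivAt x ((1/τ₁) * Real.sin (2 * θ t)) t)
    (hθ : ∀ t, HasDerivAt θ (ω - K * (x t + (τ₂/τ₁) * Real.sin (2 * θ t))) t)
    (hzero : ∀ t ∈ Set.Icc a b, Real.sin (2 * θ t) = 0) :
    ∀ t ∈ Set.Icc a b, x t = x a ∧ θ t = θ a := by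
  have hxcont : ContinuousOn x (Set.Icc a b) :=
    fun t _ => ((hx t).continuousAt).continuousWithinAt
  have hxconst : ∀ t ∈ Set.Icc a b, x t = x a := by
    apply constant_of_has_deriv_right_zero hxcont
    intro t ht
    have ht' : t ∈ Set.Icc a b := Set.mem_Icc.mpr ⟨ht.1, ht.2.le⟩
    have := (hx t).hasDerivWithinAt (s := Set.Ici t)
    rwa [hzero t ht', mul_zero] at this
  set c : ℝ := ω - K * x a with hc
  -- θ t = θ a + c * (t - a) on Icc
  have hφ : ∀ t ∈ Set.Icc a b, θ t - c * t = θ a - c * a := by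
    apply constant_of_has_deriv_right_zero
    · exact fun t _ =>
        (((hθ t).continuousAt).sub (continuousAt_const.mul continuousAt_id)).continuousWithinAt
    · intro t ht
      have ht' : t ∈ Set.Icc a b := Set.mem_Icc.mpr ⟨ht.1, ht.2.le⟩
      have h1 : HasDerivAt (fun t => θ t - c * t)
          ((ω - K * (x t + (τ₂/τ₁) * Real.sin (2 * θ t))) - c) t :=
        (hθ t).sub ((hasDerivAt_id t).const_mul c |>.congr_deriv (by ring))
      rw [hzero t ht', hxconst t ht'] at h1
      have h0 : (ω - K * (x a + τ₂ / τ₁ * 0)) - c = 0 := by rw [hc]; ring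
      rw [h0] at h1
      exact h1.hasDerivWithinAt
  have hθeq : ∀ t ∈ Set.Icc a b, θ t = θ a + c * (t - a) := by
    intro t ht
    have := hφ t ht
    linarith [this]
  -- sin(2 c (t-a)) = 0 for all t in Icc
  have hsa : Real.sin (2 * θ a) = 0 := hzero a (Set.left_mem_Icc.mpr hab.le)
  have hcs : Real.cos (2 * θ a) = 1 ∨ Real.cos (2 * θ a) = -1 :=
    Real.sin_eq_zero_iff_cos_eq.mp hsa
  have hsin0 : ∀ t ∈ Set.Icc a b, Real.sin (2 * c * (t - a)) = 0 := by
    intro t ht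
    have h := hzero t ht
    rw [hθeq t ht] at h
    have hexp : 2 * (θ a + c * (t - a)) = 2 * θ a + 2 * c * (t - a) := by ring
    rw [hexp, Real.sin_add, hsa, zero_mul, zero_add] at h
    rcases hcs with h1 | h1 <;> rw [h1] at h <;> linarith
  -- c = 0
  have hc0 : c = 0 := by
    by_contra hne
    have hcabs : 0 < |c| := abs_pos.mpr hne
    set δ : ℝ := min (b - a) (π / (4 * |c|)) with hδ
    have hδpos : 0 < δ := lt_min (by linarith) (div_pos Real.pi_pos (by positivity))
    have hδle : δ ≤ b - a := min_le_left _ _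
    have hδle2 : δ ≤ π / (4 * |c|) := min_le_right _ _
    have htmem : a + δ ∈ Set.Icc a b := ⟨by linarith, by linarith⟩
    have hs := hsin0 (a + δ) htmem
    have harg : 2 * c * (a + δ - a) = 2 * c * δ := by ring
    rw [harg] at hs
    have habs : |2 * c * δ| < π := by
      rw [abs_mul, abs_mul, abs_two, abs_of_pos hδpos]
      have : |c| * δ ≤ |c| * (π / (4 * |c|)) := by
        exact mul_le_mul_of_nonneg_left hδle2 (abs_nonneg c)
      have h4 : |c| * (π / (4 * |c|)) = π / 4 := by
        field_simp
      nlinarith [Real.pi_pos]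
    have := (Real.sin_eq_zero_iff_of_lt_of_lt (by linarith [abs_lt.mp habs]) (abs_lt.mp habs).2).mp hs
    have : 2 * c * δ ≠ 0 := by positivity
    simp_all
  intro t ht
  refine ⟨hxconst t ht, ?_⟩
  rw [hθeq t ht, hc0]; ring
end

section
/- Consider the system ẋ = (1/τ₁)·sin(2θ), θ̇ = ω − K·(x + (τ₂/τ₁)·sin(2θ)) with τ₁, τ₂, K > 0 and any ω ∈ ℝ. Every solution is bounded in the x-coordinate: there exists C (depending on the initial condition) such that |x(t) − ω/K| ≤ C for all t ≥ 0. -/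
open Real

theorem costas_solutions_bounded_in_x
    (τ₁ τ₂ K ω : ℝ) (hτ₁ : 0 < τ₁) (hτ₂ : 0 < τ₂) (hK : 0 < K)
    (x θ : ℝ → ℝ)
    (hx : ∀ t, HasDerivAt x ((1/τ₁) * Real.sin (2 * θ t)) t)
    (hθ : ∀ t, HasDerivAt θ (ω - K * (x t + (τ₂/τ₁) * Real.sin (2 * θ t))) t) :
    ∃ C : ℝ, ∀ t : ℝ, 0 ≤ t → |x t - ω / K| ≤ C := by
  set c : ℝ := ω / K with hc
  set V : ℝ → ℝ := fun t => (K * τ₁ / 2) * (x t - c)^2 + (1 - Real.cos (2 * θ t)) / 2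
    with hV
  have hVd : ∀ t, HasDerivAt V (-(K * τ₂ / τ₁) * (Real.sin (2 * θ t))^2) t := by
    intro t
    have h1 : HasDerivAt (fun t => (K * τ₁ / 2) * (x t - c)^2)
        ((K * τ₁ / 2) * (2 * (x t - c) * ((1/τ₁) * Real.sin (2 * θ t)))) t := by
      have := (((hx t).sub_const c).pow 2).const_mul (K * τ₁ / 2)
      exact this.congr_deriv (by ring)
    have h2 : HasDerivAt (fun t => (1 - Real.cos (2 * θ t)) / 2)
        ((Real.sin (2 * θ t) * (2 * (ω - K * (x t + (τ₂/τ₁) * Real.sin (2 * θ t))))) / 2) t := by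
      have hθ2 : HasDerivAt (fun t => 2 * θ t)
          (2 * (ω - K * (x t + (τ₂/τ₁) * Real.sin (2 * θ t)))) t := (hθ t).const_mul 2
      have := (Real.hasDerivAt_cos (2 * θ t)).comp t hθ2
      have := ((hasDerivAt_const t (1:ℝ)).sub this).div_const 2
      exact this.congr_deriv (by ring)
    have := h1.add h2
    refine this.congr_deriv ?_
    have hKc : K * c = ω := by
      rw [hc]; field_simp
    rw [← hKc]
    field_simp
    ring
  have hanti : AntitoneOn V (Set.Ici (0:ℝ)) := by
    apply antitoneOn_of_deriv_nonpos (convex_Ici 0)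
    · exact fun t _ => (hVd t).continuousAt.continuousWithinAt
    · intro t _
      exact ((hVd t).differentiableAt).differentiableWithinAt
    · intro t _
      rw [(hVd t).deriv]
      have : 0 ≤ (K * τ₂ / τ₁) * (Real.sin (2 * θ t))^2 := by positivity
      linarith
  refine ⟨Real.sqrt ((2 / (K * τ₁)) * (V 0 + 1)), fun t ht => ?_⟩
  have hVt : V t ≤ V 0 := by
    rcases eq_or_lt_of_le ht with h | h
    · rw [← h]
    · exact hanti (Set.self_mem_Ici) (Set.mem_Ici.2 ht) ht
  have hcos : 0 ≤ (1 - Real.cos (2 * θ t)) / 2 := by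
    have := Real.cos_le_one (2 * θ t)
    linarith
  have hsq : (x t - c)^2 ≤ (2 / (K * τ₁)) * (V 0 + 1) := by
    have hKτ : 0 < K * τ₁ := by positivity
    have h1 : (K * τ₁ / 2) * (x t - c)^2 ≤ V 0 :=
      le_trans (le_add_of_nonneg_right hcos) hVt
    rw [div_mul_eq_mul_div, le_div_iff₀ hKτ]
    have h2 : (x t - c)^2 * (K * τ₁) = 2 * (K * τ₁ / 2 * (x t - c)^2) := by ring
    rw [h2]; linarith
  calc |x t - ω / K| = Real.sqrt ((x t - c)^2) := by
        rw [Real.sqrt_sq_eq_abs, hc]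
    _ ≤ Real.sqrt ((2 / (K * τ₁)) * (V 0 + 1)) := Real.sqrt_le_sqrt hsq
end

section
/- Consider the system ẋ = (1/τ₁)·sin(2θ), θ̇ = ω − K·(x + (τ₂/τ₁)·sin(2θ)) with τ₁, τ₂, K > 0 and arbitrary real ω. Then along every global solution, V(x(t), θ(t)) = (Kτ₁/2)(x(t) − ω/K)² + (1 − cos 2θ(t))/2 is nonincreasing and converges to a finite limit as t → ∞. -/
open Real

theorem costas_lyapunov_nonincreasing_and_convergent
    (τ₁ τ₂ K ω : ℝ) (hτ₁ : 0 < τ₁) (hτ₂ : 0 < τ₂) (hK : 0 < K)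
    (x θ : ℝ → ℝ)
    (hx : ∀ t, HasDerivAt x ((1/τ₁) * Real.sin (2 * θ t)) t)
    (hθ : ∀ t, HasDerivAt θ (ω - K * (x t + (τ₂/τ₁) * Real.sin (2 * θ t))) t)
    (V : ℝ → ℝ)
    (hV : V = fun t => K * τ₁ / 2 * (x t - ω/K)^2 + (1 - Real.cos (2 * θ t)) / 2) :
    AntitoneOn V (Set.Ici 0) ∧ ∃ L : ℝ, Filter.Tendsto V Filter.atTop (nhds L) := by
  have hτ₁' : τ₁ ≠ 0 := ne_of_gt hτ₁
  have hK' : K ≠ 0 := ne_of_gt hK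
  have hV' : ∀ t, HasDerivAt V (-(K * τ₂ / τ₁) * (Real.sin (2 * θ t))^2) t := by
    intro t
    have h1 : HasDerivAt (fun t => (x t - ω/K)^2)
        (2 * (x t - ω/K) * ((1/τ₁) * Real.sin (2 * θ t))) t := by
      have := ((hx t).sub_const (ω/K)).fun_pow 2
      simpa [mul_comm, mul_assoc, mul_left_comm] using this
    have h2 : HasDerivAt (fun t => 2 * θ t)
        (2 * (ω - K * (x t + (τ₂/τ₁) * Real.sin (2 * θ t)))) t := (hθ t).const_mul 2
    have h3 : HasDerivAt (fun t => Real.cos (2 * θ t))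
        (-Real.sin (2 * θ t) * (2 * (ω - K * (x t + (τ₂/τ₁) * Real.sin (2 * θ t))))) t :=
      h2.cos
    have h4 := ((h1.const_mul (K * τ₁ / 2)).add
      (((hasDerivAt_const t (1:ℝ)).sub h3).div_const 2))
    rw [hV]
    refine HasDerivAt.congr_deriv h4 ?_
    field_simp
    ring
  have hanti : Antitone V := by
    apply antitone_of_deriv_nonpos
    · exact fun t => (hV' t).differentiableAt
    · intro t
      rw [(hV' t).deriv]
      have : 0 ≤ (K * τ₂ / τ₁) * (Real.sin (2 * θ t))^2 :=
        mul_nonneg (le_of_lt (div_pos (mul_pos hK hτ₂) hτ₁)) (sq_nonneg _)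
      linarith
  refine ⟨hanti.antitoneOn _, ?_⟩
  have hbdd : BddBelow (Set.range V) := by
    refine ⟨0, ?_⟩
    rintro _ ⟨t, rfl⟩
    rw [hV]
    have h1 : 0 ≤ K * τ₁ / 2 * (x t - ω/K)^2 :=
      mul_nonneg (by positivity) (sq_nonneg _)
    have h2 : Real.cos (2 * θ t) ≤ 1 := Real.cos_le_one _
    simp only
    linarith
  exact ⟨_, tendsto_atTop_ciInf hanti hbdd⟩
end

section
/- Let V(x, θ) = (Kτ₁/2)(x − ω/K)² + (1 − cos 2θ)/2 with K, τ₁ > 0. For the system ẋ = (1/τ₁)sin(2θ), θ̇ = ω − K(x + (τ₂/τ₁)sin(2θ)) with τ₂ > 0, if a global solution satisfies V(x(t), θ(t)) = V(x(0), θ(0)) for all t ≥ 0, then the solution is an equilibrium. -/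
open Real

theorem costas_lasalle_invariance
    (τ₁ τ₂ K ω : ℝ) (hτ₁ : 0 < τ₁) (hτ₂ : 0 < τ₂) (hK : 0 < K)
    (x θ : ℝ → ℝ)
    (hx : ∀ t, HasDerivAt x ((1/τ₁) * Real.sin (2 * θ t)) t)
    (hθ : ∀ t, HasDerivAt θ (ω - K * (x t + (τ₂/τ₁) * Real.sin (2 * θ t))) t)
    (V : ℝ → ℝ → ℝ)
    (hV : V = fun x θ => K * τ₁ / 2 * (x - ω/K)^2 + (1 - Real.cos (2*θ)) / 2)
    (hconst : ∀ t : ℝ, 0 ≤ t → V (x t) (θ t) = V (x 0) (θ 0)) :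
    Real.sin (2 * θ 0) = 0 ∧ ∀ t : ℝ, 0 ≤ t → x t = ω / K ∧ θ t = θ 0 := by
  subst hV
  -- derivative of the Lyapunov function along the solution
  have hg : ∀ t, HasDerivAt (fun t => K * τ₁ / 2 * (x t - ω/K)^2 + (1 - Real.cos (2*θ t)) / 2)
      (-(K*τ₂/τ₁) * (Real.sin (2*θ t))^2) t := by
    intro t
    have h2θ : HasDerivAt (fun t => 2 * θ t)
        (2 * (ω - K * (x t + (τ₂/τ₁) * Real.sin (2 * θ t)))) t := (hθ t).const_mul 2
    have hcos : HasDerivAt (fun t => Real.cos (2 * θ t))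
        (-Real.sin (2 * θ t) * (2 * (ω - K * (x t + (τ₂/τ₁) * Real.sin (2 * θ t))))) t :=
      by have := (Real.hasDerivAt_cos (2 * θ t)).comp t h2θ; exact this
    have hx2 : HasDerivAt (fun t => K * τ₁ / 2 * (x t - ω/K)^2)
        (K * τ₁ / 2 * ((2:ℕ) * (x t - ω/K)^1 * ((1/τ₁) * Real.sin (2 * θ t)))) t :=
      (((hx t).sub_const _).pow 2).const_mul _
    have := hx2.add (((hasDerivAt_const t (1:ℝ)).sub hcos).div_const 2)
    refine this.congr_deriv ?_
    have hτ₁' : τ₁ ≠ 0 := ne_of_gt hτ₁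
    push_cast
    field_simp
    ring
  -- continuity facts
  have hxc : Continuous x := by
    rw [continuous_iff_continuousAt]; exact fun t => (hx t).continuousAt
  have hθc : Continuous θ := by
    rw [continuous_iff_continuousAt]; exact fun t => (hθ t).continuousAt
  have hsc : Continuous (fun t => Real.sin (2 * θ t)) :=
    Real.continuous_sin.comp (continuous_const.mul hθc)
  -- sin(2θ t) = 0 for t > 0
  have hsin_pos : ∀ t : ℝ, 0 < t → Real.sin (2 * θ t) = 0 := by
    intro t ht
    have hEq : (fun t => K * τ₁ / 2 * (x t - ω/K)^2 + (1 - Real.cos (2*θ t)) / 2)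
        =ᶠ[nhds t] fun _ => K * τ₁ / 2 * (x 0 - ω/K)^2 + (1 - Real.cos (2*θ 0)) / 2 := by
      filter_upwards [Ioi_mem_nhds ht] with s hs
      exact hconst s (le_of_lt hs)
    have h0 : HasDerivAt (fun t => K * τ₁ / 2 * (x t - ω/K)^2 + (1 - Real.cos (2*θ t)) / 2)
        0 t := (hasDerivAt_const t _).congr_of_eventuallyEq hEq
    have huniq := h0.unique (hg t)
    have hc : 0 < K*τ₂/τ₁ := by positivity
    have : (Real.sin (2*θ t))^2 = 0 := by
      by_contra h
      have h2 : (0:ℝ) < (Real.sin (2*θ t))^2 := lt_of_le_of_ne (sq_nonneg _) (Ne.symm h)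
      nlinarith
    exact pow_eq_zero_iff (n := 2) (by norm_num) |>.mp this.symm.symm
  -- sin(2θ 0) = 0 by continuity
  have hsin0 : Real.sin (2 * θ 0) = 0 := by
    have h1 : Filter.Tendsto (fun t => Real.sin (2 * θ t)) (nhdsWithin 0 (Set.Ioi 0))
        (nhds (Real.sin (2 * θ 0))) := (hsc.tendsto 0).mono_left nhdsWithin_le_nhds
    have h2 : Filter.Tendsto (fun t => Real.sin (2 * θ t)) (nhdsWithin 0 (Set.Ioi 0))
        (nhds 0) := by
      apply Filter.Tendsto.congr' _ tendsto_const_nhds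
      filter_upwards [self_mem_nhdsWithin] with s hs
      exact (hsin_pos s hs).symm
    exact tendsto_nhds_unique h1 h2
  have hsin : ∀ t : ℝ, 0 ≤ t → Real.sin (2 * θ t) = 0 := by
    intro t ht
    rcases eq_or_lt_of_le ht with h | h
    · rw [← h]; exact hsin0
    · exact hsin_pos t h
  -- x t = ω/K for t > 0
  have hx_pos : ∀ t : ℝ, 0 < t → x t = ω / K := by
    intro t ht
    have hsEq : (fun t => Real.sin (2 * θ t)) =ᶠ[nhds t] fun _ => (0:ℝ) := by
      filter_upwards [Ioi_mem_nhds ht] with s hs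
      exact hsin_pos s hs
    have h0 : HasDerivAt (fun t => Real.sin (2 * θ t)) 0 t :=
      (hasDerivAt_const t (0:ℝ)).congr_of_eventuallyEq hsEq
    have h2θ : HasDerivAt (fun t => 2 * θ t)
        (2 * (ω - K * (x t + (τ₂/τ₁) * Real.sin (2 * θ t)))) t := (hθ t).const_mul 2
    have hs' : HasDerivAt (fun t => Real.sin (2 * θ t))
        (Real.cos (2 * θ t) * (2 * (ω - K * (x t + (τ₂/τ₁) * Real.sin (2 * θ t))))) t :=
      by have := (Real.hasDerivAt_sin (2 * θ t)).comp t h2θ; exact this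
    have huniq := h0.unique hs'
    have hcos2 : (Real.cos (2 * θ t))^2 = 1 := by
      have := Real.sin_sq_add_cos_sq (2 * θ t)
      rw [hsin_pos t ht] at this; nlinarith
    have hcosne : Real.cos (2 * θ t) ≠ 0 := by
      intro h; rw [h] at hcos2; norm_num at hcos2
    have hz : ω - K * (x t + (τ₂/τ₁) * Real.sin (2 * θ t)) = 0 := by
      rcases mul_eq_zero.mp huniq.symm with h | h
      · exact absurd h hcosne
      · linarith [mul_eq_zero.mp h]
      
    rw [hsin_pos t ht] at hz
    field_simp at hz ⊢
    have h' : τ₁ * (ω - K * x t) = 0 := by linarith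
    have h'' := (mul_eq_zero.mp h').resolve_left (ne_of_gt hτ₁)
    linarith
  -- x 0 = ω/K by continuity
  have hx0 : x 0 = ω / K := by
    have h1 : Filter.Tendsto x (nhdsWithin 0 (Set.Ioi 0)) (nhds (x 0)) :=
      (hxc.tendsto 0).mono_left nhdsWithin_le_nhds
    have h2 : Filter.Tendsto x (nhdsWithin 0 (Set.Ioi 0)) (nhds (ω/K)) := by
      apply Filter.Tendsto.congr' _ tendsto_const_nhds
      filter_upwards [self_mem_nhdsWithin] with s hs
      exact (hx_pos s hs).symm
    exact tendsto_nhds_unique h1 h2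
  have hxall : ∀ t : ℝ, 0 ≤ t → x t = ω / K := by
    intro t ht
    rcases eq_or_lt_of_le ht with h | h
    · rw [← h]; exact hx0
    · exact hx_pos t h
  -- θ has zero derivative on [0,∞), hence constant
  refine ⟨hsin0, fun t ht => ⟨hxall t ht, ?_⟩⟩
  have := constant_of_has_deriv_right_zero (f := θ) (a := 0) (b := t)
    (hθc.continuousOn)
    (fun s hs => by
      have hz : ω - K * (x s + (τ₂/τ₁) * Real.sin (2 * θ s)) = 0 := by
        rw [hsin s hs.1, hxall s hs.1]
        field_simp
        ring
      have := hθ s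
      rw [hz] at this
      exact this.hasDerivWithinAt)
  exact this t (Set.mem_Icc.mpr ⟨ht, le_refl t⟩)
end
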